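/- Let T be a densely defined C-selfadjoint operator admitting the polar decomposition T = C J |T| with J a conjugation commuting strongly with |T|, and suppose λ is an eigenvalue of |T| whose eigenspace is finite-dimensional (discrete spectrum). Then there exists a nonzero ψ ∈ D(T) with T ψ = λ C ψ. -/
import Mathlib


open scoped ComplexConjugate

local notation "⟪" x ", " y "⟫" => @inner ℂ _ _ x y

/-- If `T = C J |T|` is a densely defined `C`-selfadjoint operator with `J` a conjugation
commuting strongly with `|T|`, and `λ > 0` is an eigenvalue of `|T|` with
finite-dimensional eigenspace, then there is a nonzero `ψ ∈ D(T)` with `T ψ = λ C ψ`. -/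
theorem antilinear_eigenvector_from_eigenvalue {H : Type*} [NormedAddCommGroup H]
    [InnerProductSpace ℂ H] [CompleteSpace H]
    (C J : H → H)
    (hCadd : ∀ f g, C (f + g) = C f + C g)
    (hCsmul : ∀ (c : ℂ) (f : H), C (c • f) = conj c • C f)
    (hCinv : ∀ f, C (C f) = f)
    (hCinner : ∀ f g, ⟪C f, C g⟫ = ⟪g, f⟫)
    (hJadd : ∀ f g, J (f + g) = J f + J g)
    (hJsmul : ∀ (c : ℂ) (f : H), J (c • f) = conj c • J f)
    (hJinv : ∀ f, J (J f) = f)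
    (hJinner : ∀ f g, ⟪J f, J g⟫ = ⟪g, f⟫)
    (A : H →ₗ.[ℂ] H)
    (hdense : Dense (A.domain : Set H))
    (hAsa : A.adjoint = A)
    (hApos : ∀ x : A.domain, 0 ≤ (⟪(x : H), A x⟫).re)
    (hJdom : ∀ x, x ∈ A.domain ↔ J x ∈ A.domain)
    (hJA : ∀ (x : A.domain) (h : J (x : H) ∈ A.domain), J (A x) = A ⟨J (x : H), h⟩)
    (lam : ℝ) (hlam : 0 < lam)
    (hfin : FiniteDimensional ℂ
      ↥(Submodule.span ℂ {x : H | ∃ hx : x ∈ A.domain, A ⟨x, hx⟩ = (lam : ℂ) • x}))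
    (heig : ∃ φ : A.domain, (φ : H) ≠ 0 ∧ A φ = (lam : ℂ) • (φ : H)) :
    ∃ (ψ : H) (hψ : ψ ∈ A.domain), ψ ≠ 0 ∧
      C (J (A ⟨ψ, hψ⟩)) = (lam : ℂ) • C ψ := by
  obtain ⟨φ, hφne, hφeig⟩ := heig
  -- key: if ψ is a nonzero eigenvector fixed by J, we are done
  have key : ∀ (ψ : H) (hψ : ψ ∈ A.domain), ψ ≠ 0 → A ⟨ψ, hψ⟩ = (lam : ℂ) • ψ →
      J ψ = ψ →
      ∃ (ψ : H) (hψ : ψ ∈ A.domain), ψ ≠ 0 ∧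
        C (J (A ⟨ψ, hψ⟩)) = (lam : ℂ) • C ψ := by
    intro ψ hψ hne heq hfix
    refine ⟨ψ, hψ, hne, ?_⟩
    rw [heq, hJsmul, Complex.conj_ofReal, hfix, hCsmul, Complex.conj_ofReal]
  have hJφ : J (φ : H) ∈ A.domain := (hJdom _).mp φ.2
  have hAJφ : A ⟨J (φ : H), hJφ⟩ = (lam : ℂ) • J (φ : H) := by
    rw [← hJA φ hJφ, hφeig, hJsmul, Complex.conj_ofReal]
  by_cases hc : (φ : H) + J (φ : H) = 0
  · -- then J φ = -φ, take ψ = i • φ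
    have hJφeq : J (φ : H) = -(φ : H) := by
      rw [← neg_eq_of_add_eq_zero_right hc]
    have hψdom : Complex.I • (φ : H) ∈ A.domain := A.domain.smul_mem _ φ.2
    refine key (Complex.I • (φ : H)) hψdom ?_ ?_ ?_
    · simp [smul_eq_zero, Complex.I_ne_zero, hφne]
    · have : (⟨Complex.I • (φ : H), hψdom⟩ : A.domain) = Complex.I • φ := rfl
      rw [this, A.map_smul, hφeig, smul_comm]
    · rw [hJsmul, Complex.conj_I, hJφeq, neg_smul, smul_neg, neg_neg]
  · -- take ψ = φ + J φ
    have hψdom : (φ : H) + J (φ : H) ∈ A.domain := A.domain.add_mem φ.2 hJφ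
    refine key _ hψdom hc ?_ ?_
    · have : (⟨(φ : H) + J (φ : H), hψdom⟩ : A.domain) = φ + ⟨J (φ : H), hJφ⟩ := rfl
      rw [this, A.map_add, hφeig, hAJφ, smul_add]
    · rw [hJadd, hJinv, add_comm]
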